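/- For every t ≤ T the denominator D_N(t) = (δ⁻ e^{(δ⁺−δ⁻)(T−t)} − δ⁺) − c(1 − 1/N²)(e^{(δ⁺−δ⁻)(T−t)} − 1) is strictly negative; in particular the explicit formula for η^N_t is well defined for all t ≤ T. -/
import Mathlib


/-- The denominator appearing in the explicit formula for `η^N_t`, as a function of
the parameters `a, q, ε, c`, the horizon `T`, the coefficient `r` (which equals
`1 - 1/N²` for the `N`-player game) and the time `t`. -/
noncomputable def denomAux (a q ε c T r t : ℝ) : ℝ :=
  let R := (a + q) ^ 2 + r * (ε - q ^ 2)
  let dp := -(a + q) + Real.sqrt R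
  let dm := -(a + q) - Real.sqrt R
  let e := Real.exp ((dp - dm) * (T - t))
  (dm * e - dp) - c * r * (e - 1)

/-- For every `t ≤ T`, the denominator
`D_N(t) = (δ⁻ e^{(δ⁺−δ⁻)(T−t)} − δ⁺) − c (1 − 1/N²)(e^{(δ⁺−δ⁻)(T−t)} − 1)`
is strictly negative, so the explicit formula for `η^N_t` is well defined for all
`t ≤ T`. -/
theorem statement_1 (T a q ε c : ℝ) (N : ℕ) (hT : 0 < T) (hN : 1 ≤ N)
    (ha : 0 ≤ a) (hq : 0 ≤ q) (hc : 0 ≤ c) (hε : q ^ 2 ≤ ε)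
    (hR : 0 < (a + q) ^ 2 + (1 - 1 / (N : ℝ) ^ 2) * (ε - q ^ 2)) :
    ∀ t ≤ T, denomAux a q ε c T (1 - 1 / (N : ℝ) ^ 2) t < 0 := by
  intro t ht
  unfold denomAux
  set R := (a + q) ^ 2 + (1 - 1 / (N : ℝ) ^ 2) * (ε - q ^ 2) with hRdef
  set s := Real.sqrt R with hs
  have hs0 : 0 < s := Real.sqrt_pos.mpr hR
  have hr0 : 0 ≤ 1 - 1 / (N : ℝ) ^ 2 := by
    have hN1 : (1 : ℝ) ≤ (N : ℝ) := by exact_mod_cast hN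
    have : 1 / (N : ℝ) ^ 2 ≤ 1 := by
      rw [div_le_one (by positivity)]
      nlinarith
    linarith
  set e := Real.exp ((-(a + q) + s - (-(a + q) - s)) * (T - t)) with he
  have he1 : 1 ≤ e := by
    rw [he]
    apply Real.one_le_exp
    have : (-(a + q) + s - (-(a + q) - s)) = 2 * s := by ring
    rw [this]
    have : 0 ≤ T - t := by linarith
    positivity
  have hdm : -(a + q) - s < 0 := by nlinarith
  simp only
  nlinarith [mul_nonneg (mul_nonneg hc hr0) (by linarith : (0:ℝ) ≤ e - 1),
    mul_le_mul_of_nonpos_left he1 (le_of_lt hdm)]
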